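/- (Kirchhoff index.) Let P be a primitive stochastic matrix on a finite nonempty state space X with stationary distribution π, F the fundamental matrix, Ω the resistance distance, and h the mean hitting times of the chain. Then Σ_{i,j ∈ X} Ω_{i,j} = 2 · |X| · t^{av}, where t^{av} := Σ_{i,j ∈ X} π_i π_j h(i,j) is the average hitting time of the chain. -/

import Mathlib

open Matrix BigOperators Finset

theorem stmt_10
    {X : Type*} [Fintype X] [Nonempty X] [DecidableEq X]
    (P : Matrix X X ℝ)
    (hP_nonneg : ∀ i j, 0 ≤ P i j)
    (hP_row : ∀ i, ∑ j, P i j = 1)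
    (hP_prim : ∃ N : ℕ, 1 ≤ N ∧ ∀ i j, 0 < (P ^ N) i j)
    (pi : X → ℝ)
    (hpi_pos : ∀ i, 0 < pi i)
    (hpi_sum : ∑ i, pi i = 1)
    (hpi_stat : ∀ j, ∑ i, pi i * P i j = pi j)
    (PiM : Matrix X X ℝ)
    (hPiM : ∀ i j, PiM i j = pi j)
    (F : Matrix X X ℝ)
    (hF1 : F * (1 - P + PiM) = 1)
    (hF2 : (1 - P + PiM) * F = 1)
    (Ω : X → X → ℝ)
    (hΩ : ∀ i j, Ω i j = F i i + F j j - F i j - F j i)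
    (h : X → X → ℝ)
    (hdiag : ∀ j, h j j = 0)
    (hrec : ∀ i j, i ≠ j → h i j = 1 + ∑ k, P i k * h k j)
    : ∑ i, ∑ j, Ω i j = 2 * (Fintype.card X : ℝ) * (∑ i, ∑ j, pi i * pi j * h i j) := by
  classical
  have hpi_ne : ∀ j, pi j ≠ 0 := fun j => (hpi_pos j).ne'
  -- entries of M := 1 - P + PiM
  have hM : ∀ i k, (1 - P + PiM) i k = (if i = k then (1:ℝ) else 0) - P i k + pi k := by
    intro i k
    simp [Matrix.sub_apply, Matrix.add_apply, Matrix.one_apply, hPiM]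
  -- row sums of M are 1
  have hMrow : ∀ i, ∑ k, (1 - P + PiM) i k = 1 := by
    intro i
    simp only [hM]
    rw [Finset.sum_add_distrib, Finset.sum_sub_distrib]
    simp [hP_row i, hpi_sum]
  -- row sums of F are 1
  have rowF : ∀ m, ∑ i, F m i = 1 := by
    intro m
    have h1 : ∑ k, (F * (1 - P + PiM)) m k = ∑ k, (1 : Matrix X X ℝ) m k := by
      rw [hF1]
    simp only [Matrix.mul_apply, Matrix.one_apply] at h1
    rw [Finset.sum_comm] at h1
    simp only [← Finset.mul_sum, hMrow, mul_one] at h1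
    simpa using h1
  -- the (F*P) entry formula
  have hFP : ∀ m k, ∑ i, F m i * P i k
      = F m k + pi k - (if m = k then 1 else 0) := by
    intro m k
    have h1 := congrFun (congrFun hF1 m) k
    rw [Matrix.mul_apply] at h1
    simp only [hM, Matrix.one_apply] at h1
    have h2 : ∑ i, F m i * ((if i = k then (1:ℝ) else 0) - P i k + pi k)
        = F m k - ∑ i, F m i * P i k + pi k := by
      rw [Finset.sum_congr rfl (fun i _ => by ring_nf :
        ∀ i ∈ Finset.univ, F m i * ((if i = k then (1:ℝ) else 0) - P i k + pi k)
          = F m i * (if i = k then (1:ℝ) else 0) - F m i * P i k + F m i * pi k)]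
      rw [Finset.sum_add_distrib, Finset.sum_sub_distrib, ← Finset.sum_mul, rowF]
      simp [Finset.sum_ite_eq']
    rw [h2] at h1
    linarith [h1]
  -- Kac's formula
  have kac : ∀ j, pi j * (1 + ∑ k, P j k * h k j) = 1 := by
    intro j
    have e1 : ∀ i, pi i * h i j
        = pi i * (1 + ∑ k, P i k * h k j)
          - (if i = j then pi j * (1 + ∑ k, P j k * h k j) else 0) := by
      intro i
      by_cases hij : i = j
      · subst hij; simp [hdiag]
      · rw [hrec i j hij]; simp [hij]
    have e2 : ∑ i, pi i * h i j
        = ∑ i, pi i * (1 + ∑ k, P i k * h k j)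
          - pi j * (1 + ∑ k, P j k * h k j) := by
      rw [Finset.sum_congr rfl (fun i _ => e1 i), Finset.sum_sub_distrib]
      simp [Finset.sum_ite_eq']
    have e3 : ∑ i, pi i * (1 + ∑ k, P i k * h k j)
        = 1 + ∑ k, pi k * h k j := by
      have : ∀ i, pi i * (1 + ∑ k, P i k * h k j)
          = pi i + ∑ k, (pi i * P i k) * h k j := by
        intro i
        rw [mul_add, mul_one, Finset.mul_sum]
        ring_nf
      rw [Finset.sum_congr rfl (fun i _ => this i), Finset.sum_add_distrib, hpi_sum]
      congr 1
      rw [Finset.sum_comm]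
      refine Finset.sum_congr rfl fun k _ => ?_
      rw [← Finset.sum_mul, hpi_stat]
    rw [e3] at e2
    linarith [e2]
  -- unified recurrence
  have hstar : ∀ i j, h i j - ∑ k, P i k * h k j
      = 1 - (if i = j then 1 / pi j else 0) := by
    intro i j
    by_cases hij : i = j
    · subst hij
      have h1 : 1 + ∑ k, P i k * h k i = 1 / pi i := by
        rw [eq_div_iff (hpi_ne i)]
        linear_combination kac i
      rw [hdiag, if_pos rfl]
      linarith [h1]
    · rw [hrec i j hij]; simp [hij]
  -- key identity: h m j - s_j = 1 - F m j / pi j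
  have key : ∀ m j, h m j - ∑ k, pi k * h k j = 1 - F m j / pi j := by
    intro m j
    have T1 : ∑ i, F m i * (h i j - ∑ k, P i k * h k j)
        = 1 - F m j / pi j := by
      calc ∑ i, F m i * (h i j - ∑ k, P i k * h k j)
          = ∑ i, (F m i - F m i * (if i = j then 1 / pi j else 0)) := by
            refine Finset.sum_congr rfl fun i _ => ?_
            rw [hstar i j]; ring
        _ = (∑ i, F m i) - ∑ i, F m i * (if i = j then 1 / pi j else 0) :=
            Finset.sum_sub_distrib _ _
        _ = 1 - F m j / pi j := by
            rw [rowF m]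
            congr 1
            simp [mul_ite, Finset.sum_ite_eq', div_eq_mul_inv]
    have T2 : ∑ i, F m i * (h i j - ∑ k, P i k * h k j)
        = h m j - ∑ k, pi k * h k j := by
      have swap : ∑ i, F m i * ∑ k, P i k * h k j
          = ∑ k, (∑ i, F m i * P i k) * h k j := by
        simp only [Finset.mul_sum, Finset.sum_mul]
        rw [Finset.sum_comm]
        refine Finset.sum_congr rfl fun k _ => Finset.sum_congr rfl fun i _ => by ring
      have step2 : ∑ k, (∑ i, F m i * P i k) * h k j
          = ∑ k, (F m k * h k j + pi k * h k j
              - (if m = k then (1:ℝ) else 0) * h k j) := by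
        refine Finset.sum_congr rfl fun k _ => ?_
        rw [hFP m k]; ring
      have step3 : ∑ k, (F m k * h k j + pi k * h k j
              - (if m = k then (1:ℝ) else 0) * h k j)
          = (∑ k, F m k * h k j) + (∑ k, pi k * h k j) - h m j := by
        rw [Finset.sum_sub_distrib, Finset.sum_add_distrib]
        congr 1
        simp [ite_mul, Finset.sum_ite_eq]
      calc ∑ i, F m i * (h i j - ∑ k, P i k * h k j)
          = (∑ i, F m i * h i j) - ∑ i, F m i * ∑ k, P i k * h k j := by
            rw [← Finset.sum_sub_distrib]
            exact Finset.sum_congr rfl fun i _ => by ring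
        _ = h m j - ∑ k, pi k * h k j := by
            rw [swap, step2, step3]; ring
    linarith [T1, T2]
  -- s_j formula
  have sdef : ∀ j, ∑ k, pi k * h k j = F j j / pi j - 1 := by
    intro j
    have := key j j
    rw [hdiag] at this
    linarith [this]
  -- RHS value
  have rhs : ∑ i, ∑ j, pi i * pi j * h i j = (∑ j, F j j) - 1 := by
    rw [Finset.sum_comm]
    have : ∀ j, ∑ i, pi i * pi j * h i j = F j j - pi j := by
      intro j
      have e : ∑ i, pi i * pi j * h i j = pi j * ∑ i, pi i * h i j := by
        rw [Finset.mul_sum]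
        exact Finset.sum_congr rfl fun i _ => by ring
      rw [e, sdef j]
      field_simp [hpi_ne j]
    rw [Finset.sum_congr rfl (fun j _ => this j), Finset.sum_sub_distrib, hpi_sum]
  -- column-like sum of F over double sum
  have colsum : ∑ i, ∑ j, F j i = (Fintype.card X : ℝ) := by
    rw [Finset.sum_comm]
    simp [rowF, Finset.card_univ]
  have rowsum : ∑ i, ∑ j, F i j = (Fintype.card X : ℝ) := by
    simp [rowF, Finset.card_univ]
  -- LHS
  have lhs : ∑ i, ∑ j, Ω i j
      = 2 * (Fintype.card X : ℝ) * ((∑ j, F j j) - 1) := by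
    have e : ∑ i, ∑ j, Ω i j
        = (∑ i : X, ∑ _j : X, F i i) + (∑ _i : X, ∑ j : X, F j j)
          - (∑ i : X, ∑ j : X, F i j) - (∑ i : X, ∑ j : X, F j i) := by
      simp only [hΩ, Finset.sum_sub_distrib, Finset.sum_add_distrib]
    rw [e, rowsum, colsum]
    have e2 : ∑ i : X, ∑ _j : X, F i i = (Fintype.card X : ℝ) * ∑ i, F i i := by
      simp [Finset.sum_const, Finset.card_univ, Finset.mul_sum]
    have e3 : ∑ _i : X, ∑ j : X, F j j = (Fintype.card X : ℝ) * ∑ j, F j j := by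
      simp [Finset.sum_const, Finset.card_univ]
    rw [e2, e3]
    ring
  rw [lhs, rhs]
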